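/- arXiv:2204.08869 — 3 statements merged into one kernel-verified Lean document; each statement's English description precedes it below -/
import Mathlib

section
/- Let (A,B) be a controllable pair with A ∈ ℝ^{n×n}, B ∈ ℝ^{n×m}, let T₀ > 0, and let W = ∫₀^{T₀} e^{-At} B Bᵀ e^{-Aᵀt} dt. Then the matrix A - B Bᵀ W^{-1} is stable, i.e., every eigenvalue of A - B Bᵀ W^{-1} has strictly negative real part. -/
open Matrix MeasureTheory

def ctrbMat {n m : ℕ} (A : Matrix (Fin n) (Fin n) ℝ) (B : Matrix (Fin n) (Fin m) ℝ) :
    Matrix (Fin n) (Fin n × Fin m) ℝ :=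
  fun i p => (A ^ (p.1 : ℕ) * B) i p.2

noncomputable def gramian {n m : ℕ} (A : Matrix (Fin n) (Fin n) ℝ)
    (B : Matrix (Fin n) (Fin m) ℝ) (T₀ : ℝ) : Matrix (Fin n) (Fin n) ℝ :=
  fun i j => ∫ t in (0:ℝ)..T₀,
    (NormedSpace.exp ((-t) • A) * B * Bᵀ * NormedSpace.exp ((-t) • Aᵀ)) i j

/-- A real square matrix is (Hurwitz) stable if all of its complex eigenvalues
have strictly negative real part. -/
def IsStableMatrix {n : ℕ} (M : Matrix (Fin n) (Fin n) ℝ) : Prop :=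
  ∀ (μ : ℂ) (v : Fin n → ℂ), v ≠ 0 →
    (M.map (Complex.ofReal)) *ᵥ v = μ • v → μ.re < 0

namespace CLSProof

attribute [local instance] Matrix.linftyOpNormedAddCommGroup Matrix.linftyOpNormedRing
  Matrix.linftyOpNormedAlgebra

noncomputable def entryCLM {p q : ℕ} (i : Fin p) (j : Fin q) :
    Matrix (Fin p) (Fin q) ℝ →L[ℝ] ℝ :=
  LinearMap.toContinuousLinearMap
    { toFun := fun M => M i j
      map_add' := fun _ _ => rfl
      map_smul' := fun _ _ => rfl }

@[simp] lemma entryCLM_apply {p q : ℕ} (i : Fin p) (j : Fin q) (M : Matrix (Fin p) (Fin q) ℝ) :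
    entryCLM i j M = M i j := rfl

noncomputable def quadCLM {p n' m' : ℕ} (P : Matrix (Fin p) (Fin n') ℝ) (y : Fin m' → ℝ)
    (j : Fin p) : Matrix (Fin n') (Fin m') ℝ →L[ℝ] ℝ :=
  LinearMap.toContinuousLinearMap
    { toFun := fun M => (P *ᵥ (M *ᵥ y)) j
      map_add' := by intro a b; simp [Matrix.add_mulVec, Matrix.mulVec_add]
      map_smul' := by intro c a; simp [Matrix.smul_mulVec, Matrix.mulVec_smul] }

@[simp] lemma quadCLM_apply {p n' m' : ℕ} (P : Matrix (Fin p) (Fin n') ℝ) (y : Fin m' → ℝ)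
    (j : Fin p) (M) : quadCLM P y j M = (P *ᵥ (M *ᵥ y)) j := rfl

lemma hasDerivAt_expL {p : ℕ} (M : Matrix (Fin p) (Fin p) ℝ) (t : ℝ) :
    HasDerivAt (fun s : ℝ => NormedSpace.exp ((-s) • M))
      (-(M * NormedSpace.exp ((-t) • M))) t := by
  have h1 : HasDerivAt (fun u : ℝ => NormedSpace.exp (u • M))
      (M * NormedSpace.exp ((-t) • M)) (-t) := hasDerivAt_exp_smul_const' M (-t)
  have h2 : HasDerivAt (fun s : ℝ => -s) (-1) t := by
    exact hasDerivAt_neg t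
  have h3 := h1.scomp t h2
  have h4 : HasDerivAt (fun s : ℝ => NormedSpace.exp ((-s) • M))
      ((-1 : ℝ) • (M * NormedSpace.exp ((-t) • M))) t := h3
  simpa using h4

lemma hasDerivAt_expR {p : ℕ} (M : Matrix (Fin p) (Fin p) ℝ) (t : ℝ) :
    HasDerivAt (fun s : ℝ => NormedSpace.exp ((-s) • M))
      (-(NormedSpace.exp ((-t) • M) * M)) t := by
  have h1 : HasDerivAt (fun u : ℝ => NormedSpace.exp (u • M))
      (NormedSpace.exp ((-t) • M) * M) (-t) := hasDerivAt_exp_smul_const M (-t)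
  have h2 : HasDerivAt (fun s : ℝ => -s) (-1) t := by
    exact hasDerivAt_neg t
  have h3 := h1.scomp t h2
  have h4 : HasDerivAt (fun s : ℝ => NormedSpace.exp ((-s) • M))
      ((-1 : ℝ) • (NormedSpace.exp ((-t) • M) * M)) t := h3
  simpa using h4

variable {n m : ℕ} (A : Matrix (Fin n) (Fin n) ℝ) (B : Matrix (Fin n) (Fin m) ℝ)

noncomputable def Ee (t : ℝ) : Matrix (Fin n) (Fin n) ℝ := NormedSpace.exp ((-t) • A)
noncomputable def Gg (t : ℝ) : Matrix (Fin n) (Fin n) ℝ := NormedSpace.exp ((-t) • Aᵀ)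
noncomputable def Ff (t : ℝ) : Matrix (Fin n) (Fin n) ℝ := Ee A t * (B * Bᵀ) * Gg A t

lemma Gg_eq_transpose (t : ℝ) : Gg A t = (Ee A t)ᵀ := by
  rw [Gg, Ee, ← Matrix.transpose_smul, Matrix.exp_transpose]

lemma Ff_zero : Ff A B 0 = B * Bᵀ := by
  simp [Ff, Ee, Gg, NormedSpace.exp_zero]

lemma hasDerivAt_Ff (t : ℝ) :
    HasDerivAt (Ff A B) (-(A * Ff A B t) - Ff A B t * Aᵀ) t := by
  have h1 : HasDerivAt (fun s => Ee A s * (B * Bᵀ))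
      (-(A * Ee A t) * (B * Bᵀ)) t := (hasDerivAt_expL A t).mul_const _
  have h2 : HasDerivAt (Gg A) (-(Gg A t * Aᵀ)) t := hasDerivAt_expR Aᵀ t
  have h3 := h1.mul h2
  have h3' : HasDerivAt (Ff A B)
      (-(A * Ee A t) * (B * Bᵀ) * Gg A t + Ee A t * (B * Bᵀ) * -(Gg A t * Aᵀ)) t := h3
  convert h3' using 1
  simp [Ff, mul_assoc, neg_mul, mul_neg]
  abel

lemma hasDerivAt_Ff_entry (t : ℝ) (i j : Fin n) :
    HasDerivAt (fun s => Ff A B s i j) ((-(A * Ff A B t) - Ff A B t * Aᵀ) i j) t :=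
  ((entryCLM i j).hasFDerivAt.comp_hasDerivAt t (hasDerivAt_Ff A B t))

lemma continuous_Ff_entry (i j : Fin n) : Continuous (fun t => Ff A B t i j) :=
  continuous_iff_continuousAt.2 fun t => (hasDerivAt_Ff_entry A B t i j).continuousAt

lemma hasDerivAt_PG {p : ℕ} (P : Matrix (Fin p) (Fin n) ℝ) (y : Fin n → ℝ) (j : Fin p) (t : ℝ) :
    HasDerivAt (fun s => (P *ᵥ (Gg A s *ᵥ y)) j)
      (-(((P * Aᵀ) *ᵥ (Gg A t *ᵥ y)) j)) t := by
  have h := (quadCLM P y j).hasFDerivAt.comp_hasDerivAt t (hasDerivAt_expL Aᵀ t)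
  change HasDerivAt (fun s => (P *ᵥ (Gg A s *ᵥ y)) j)
    ((P *ᵥ ((-(Aᵀ * NormedSpace.exp ((-t) • Aᵀ))) *ᵥ y)) j) t at h
  convert h using 1
  simp [Matrix.neg_mulVec, Matrix.mulVec_neg, ← Matrix.mulVec_mulVec, Gg]


lemma Ff_eq (t : ℝ) : Ff A B t = (Ee A t * B) * (Ee A t * B)ᵀ := by
  rw [Ff, Gg_eq_transpose, Matrix.transpose_mul]
  simp only [Matrix.mul_assoc]

lemma Ff_symm (t : ℝ) : (Ff A B t)ᵀ = Ff A B t := by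
  rw [Ff_eq, Matrix.transpose_mul, Matrix.transpose_transpose]

lemma gramian_entry (T₀ : ℝ) (i j : Fin n) :
    gramian A B T₀ i j = ∫ t in (0:ℝ)..T₀, Ff A B t i j := by
  show (∫ t in (0:ℝ)..T₀,
    (NormedSpace.exp ((-t) • A) * B * Bᵀ * NormedSpace.exp ((-t) • Aᵀ)) i j) = _
  congr 1
  funext t
  simp only [Ff, Ee, Gg, Matrix.mul_assoc]

lemma continuous_AFf_entry (i j : Fin n) : Continuous fun t => (A * Ff A B t) i j := by
  have : (fun t => (A * Ff A B t) i j) = fun t => ∑ k, A i k * Ff A B t k j := by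
    funext t; rw [Matrix.mul_apply]
  rw [this]
  exact continuous_finset_sum _ fun k _ => continuous_const.mul (continuous_Ff_entry A B k j)

lemma continuous_FfAt_entry (i j : Fin n) : Continuous fun t => (Ff A B t * Aᵀ) i j := by
  have : (fun t => (Ff A B t * Aᵀ) i j) = fun t => ∑ k, Ff A B t i k * Aᵀ k j := by
    funext t; rw [Matrix.mul_apply]
  rw [this]
  exact continuous_finset_sum _ fun k _ => (continuous_Ff_entry A B i k).mul continuous_const

lemma lyap (T₀ : ℝ) :
    A * gramian A B T₀ + gramian A B T₀ * Aᵀ = B * Bᵀ - Ff A B T₀ := by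
  ext i j
  have h1 : (A * gramian A B T₀) i j = ∫ t in (0:ℝ)..T₀, (A * Ff A B t) i j := by
    rw [Matrix.mul_apply]
    have he : ∀ k : Fin n, A i k * gramian A B T₀ k j
        = ∫ t in (0:ℝ)..T₀, A i k * Ff A B t k j := fun k => by
      rw [gramian_entry, intervalIntegral.integral_const_mul]
    simp_rw [he]
    rw [← intervalIntegral.integral_finset_sum (f := fun k t => A i k * Ff A B t k j) (fun k _ =>
      (continuous_const.mul (continuous_Ff_entry A B k j)).intervalIntegrable _ _)]
    refine intervalIntegral.integral_congr fun t _ => ?_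
    rw [Matrix.mul_apply]
  have h2 : (gramian A B T₀ * Aᵀ) i j = ∫ t in (0:ℝ)..T₀, (Ff A B t * Aᵀ) i j := by
    rw [Matrix.mul_apply]
    have he : ∀ k : Fin n, gramian A B T₀ i k * Aᵀ k j
        = ∫ t in (0:ℝ)..T₀, Ff A B t i k * Aᵀ k j := fun k => by
      rw [gramian_entry, intervalIntegral.integral_mul_const]
    simp_rw [he]
    rw [← intervalIntegral.integral_finset_sum (f := fun k t => Ff A B t i k * Aᵀ k j) (fun k _ =>
      ((continuous_Ff_entry A B i k).mul continuous_const).intervalIntegrable _ _)]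
    refine intervalIntegral.integral_congr fun t _ => ?_
    rw [Matrix.mul_apply]
  have h3 : (∫ t in (0:ℝ)..T₀, ((-(A * Ff A B t) - Ff A B t * Aᵀ) i j))
      = Ff A B T₀ i j - Ff A B 0 i j := by
    refine intervalIntegral.integral_eq_sub_of_hasDerivAt
      (fun t _ => hasDerivAt_Ff_entry A B t i j) ?_
    have hc : Continuous fun t => (-(A * Ff A B t) - Ff A B t * Aᵀ) i j := by
      have : (fun t => (-(A * Ff A B t) - Ff A B t * Aᵀ) i j)
          = fun t => -((A * Ff A B t) i j) - (Ff A B t * Aᵀ) i j := by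
        funext t; simp
      rw [this]
      exact ((continuous_AFf_entry A B i j).neg).sub (continuous_FfAt_entry A B i j)
    exact hc.intervalIntegrable _ _
  have h4 : (∫ t in (0:ℝ)..T₀, ((-(A * Ff A B t) - Ff A B t * Aᵀ) i j))
      = -(∫ t in (0:ℝ)..T₀, (A * Ff A B t) i j)
        - ∫ t in (0:ℝ)..T₀, (Ff A B t * Aᵀ) i j := by
    rw [← intervalIntegral.integral_neg, ← intervalIntegral.integral_sub (f := fun t => -(A * Ff A B t) i j)
      (((continuous_AFf_entry A B i j).neg).intervalIntegrable _ _)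
      ((continuous_FfAt_entry A B i j).intervalIntegrable _ _)]
    refine intervalIntegral.integral_congr fun t _ => ?_
    simp
  have h0 : Ff A B 0 i j = (B * Bᵀ) i j := by rw [Ff_zero]
  have goal1 : (A * gramian A B T₀ + gramian A B T₀ * Aᵀ) i j
      = (A * gramian A B T₀) i j + (gramian A B T₀ * Aᵀ) i j := rfl
  rw [goal1, h1, h2, Matrix.sub_apply, ← h0]
  rw [h4] at h3
  linarith

lemma continuous_Ffv (y : Fin n → ℝ) (i : Fin n) : Continuous fun t => (Ff A B t *ᵥ y) i := by
  have : (fun t => (Ff A B t *ᵥ y) i) = fun t => ∑ j, Ff A B t i j * y j := by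
    funext t; rfl
  rw [this]
  exact continuous_finset_sum _ fun j _ => (continuous_Ff_entry A B i j).mul continuous_const

lemma quad (T₀ : ℝ) (y : Fin n → ℝ) :
    y ⬝ᵥ (gramian A B T₀ *ᵥ y) = ∫ t in (0:ℝ)..T₀, y ⬝ᵥ (Ff A B t *ᵥ y) := by
  have h1 : ∀ i, (gramian A B T₀ *ᵥ y) i = ∫ t in (0:ℝ)..T₀, (Ff A B t *ᵥ y) i := by
    intro i
    show (fun j => gramian A B T₀ i j) ⬝ᵥ y = _
    simp only [dotProduct]
    have he : ∀ j : Fin n, gramian A B T₀ i j * y j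
        = ∫ t in (0:ℝ)..T₀, Ff A B t i j * y j := fun j => by
      rw [gramian_entry, intervalIntegral.integral_mul_const]
    simp_rw [he]
    rw [← intervalIntegral.integral_finset_sum (f := fun j t => Ff A B t i j * y j) (fun j _ =>
      ((continuous_Ff_entry A B i j).mul continuous_const).intervalIntegrable _ _)]
    refine intervalIntegral.integral_congr fun t _ => ?_
    simp [Matrix.mulVec, dotProduct]
  simp only [dotProduct]
  have h2 : ∀ i, y i * (gramian A B T₀ *ᵥ y) i
      = ∫ t in (0:ℝ)..T₀, y i * (Ff A B t *ᵥ y) i := fun i => by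
    rw [h1, intervalIntegral.integral_const_mul]
  simp_rw [h2]
  rw [← intervalIntegral.integral_finset_sum (f := fun i t => y i * (Ff A B t *ᵥ y) i) (fun i _ =>
    (continuous_const.mul (continuous_Ffv A B y i)).intervalIntegrable _ _)]

lemma quad_point (t : ℝ) (y : Fin n → ℝ) :
    y ⬝ᵥ (Ff A B t *ᵥ y) = ∑ k, ((Bᵀ *ᵥ (Gg A t *ᵥ y)) k)^2 := by
  have hv : Bᵀ *ᵥ (Gg A t *ᵥ y) = (Ee A t * B)ᵀ *ᵥ y := by
    rw [Gg_eq_transpose, Matrix.mulVec_mulVec, ← Matrix.transpose_mul]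
  rw [hv, Ff_eq, ← Matrix.mulVec_mulVec, Matrix.dotProduct_mulVec]
  have : y ᵥ* (Ee A t * B) = (Ee A t * B)ᵀ *ᵥ y := (Matrix.mulVec_transpose _ _).symm
  rw [this]
  simp [dotProduct, pow_two]

lemma gramian_symm (T₀ : ℝ) : (gramian A B T₀)ᵀ = gramian A B T₀ := by
  ext i j
  show gramian A B T₀ j i = gramian A B T₀ i j
  rw [gramian_entry, gramian_entry]
  congr 1; funext t
  conv_lhs => rw [← Ff_symm A B t]
  rw [Matrix.transpose_apply]


lemma rank_lt_of_vecMul_eq_zero {N : Type*} [Fintype N] {M : Matrix (Fin n) N ℝ}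
    {z : Fin n → ℝ} (hz : z ≠ 0) (h : z ᵥ* M = 0) : M.rank < n := by
  rw [← Matrix.rank_transpose]
  have hker : z ∈ LinearMap.ker (Mᵀ.mulVecLin) := by
    simp only [LinearMap.mem_ker, Matrix.mulVecLin_apply, Matrix.mulVec_transpose]
    exact h
  have hnt : Nontrivial (LinearMap.ker (Mᵀ.mulVecLin)) := by
    refine nontrivial_of_ne ⟨z, hker⟩ 0 ?_
    simp only [ne_eq, Submodule.mk_eq_zero]
    exact hz
  have hpos : 0 < Module.finrank ℝ (LinearMap.ker (Mᵀ.mulVecLin)) :=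
    Module.finrank_pos_iff.2 hnt
  have hsum := LinearMap.finrank_range_add_finrank_ker (Mᵀ.mulVecLin)
  have hdom : Module.finrank ℝ (Fin n → ℝ) = n := by simp
  have hrk : Mᵀ.rank = Module.finrank ℝ (LinearMap.range Mᵀ.mulVecLin) := rfl
  omega

lemma integrand_zero_on_Ioo {T₀ : ℝ} (hT : 0 < T₀) {f : ℝ → ℝ} (hc : Continuous f)
    (h0 : ∀ t, 0 ≤ f t) (hI : (∫ t in (0:ℝ)..T₀, f t) = 0) :
    ∀ t ∈ Set.Ioo (0:ℝ) T₀, f t = 0 := by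
  by_contra hcon
  push_neg at hcon
  obtain ⟨t₀, ht₀, hne⟩ := hcon
  have hpos : 0 < f t₀ := (h0 t₀).lt_of_ne (Ne.symm hne)
  have hU : IsOpen (f ⁻¹' Set.Ioi (f t₀ / 2)) := (isOpen_Ioi).preimage hc
  have ht₀U : t₀ ∈ f ⁻¹' Set.Ioi (f t₀ / 2) := by
    simp only [Set.mem_preimage, Set.mem_Ioi]
    linarith
  obtain ⟨ε, hε, hball⟩ := Metric.isOpen_iff.1 hU t₀ ht₀U
  set a := max (t₀ - ε / 2) 0 with ha
  set b := min (t₀ + ε / 2) T₀ with hb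
  have hat : a < t₀ := by
    apply max_lt <;> [linarith; exact ht₀.1]
  have htb : t₀ < b := by
    apply lt_min <;> [linarith; exact ht₀.2]
  have h0a : 0 ≤ a := le_max_right _ _
  have hbT : b ≤ T₀ := min_le_right _ _
  have hsub : ∀ x ∈ Set.Ioo a b, 0 < f x := by
    intro x hx
    have h1 : t₀ - ε / 2 ≤ a := le_max_left _ _
    have h2 : b ≤ t₀ + ε / 2 := min_le_left _ _
    have : x ∈ Metric.ball t₀ ε := by
      rw [Metric.mem_ball, Real.dist_eq, abs_lt]
      constructor <;> [linarith [hx.1]; linarith [hx.2]]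
    have := hball this
    simp only [Set.mem_preimage, Set.mem_Ioi] at this
    linarith
  have hint : ∀ u v : ℝ, IntervalIntegrable f volume u v := fun u v =>
    hc.intervalIntegrable u v
  have hmid : 0 < ∫ t in a..b, f t :=
    intervalIntegral.intervalIntegral_pos_of_pos_on (hint a b) hsub (hat.trans htb)
  have hleft : 0 ≤ ∫ t in (0:ℝ)..a, f t :=
    intervalIntegral.integral_nonneg h0a (fun u _ => h0 u)
  have hright : 0 ≤ ∫ t in b..T₀, f t :=
    intervalIntegral.integral_nonneg hbT (fun u _ => h0 u)
  have hsplit : (∫ t in (0:ℝ)..a, f t) + (∫ t in a..b, f t) + (∫ t in b..T₀, f t)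
      = ∫ t in (0:ℝ)..T₀, f t := by
    rw [intervalIntegral.integral_add_adjacent_intervals (hint 0 a) (hint a b),
      intervalIntegral.integral_add_adjacent_intervals (hint 0 b) (hint b T₀)]
  rw [hI] at hsplit
  linarith

lemma expGg_inv (t : ℝ) (y : Fin n → ℝ) :
    NormedSpace.exp (t • Aᵀ) *ᵥ (Gg A t *ᵥ y) = y := by
  rw [Matrix.mulVec_mulVec, Gg]
  have hcomm : Commute (t • Aᵀ) ((-t) • Aᵀ) := ((Commute.refl Aᵀ).smul_left t).smul_right (-t)
  rw [← Matrix.exp_add_of_commute _ _ hcomm]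
  have : t • Aᵀ + (-t) • Aᵀ = 0 := by rw [← add_smul]; simp
  rw [this, NormedSpace.exp_zero, Matrix.one_mulVec]

lemma gramian_posdef {T₀ : ℝ} (hT : 0 < T₀) (hctrb : (ctrbMat A B).rank = n)
    (y : Fin n → ℝ) (hy : y ≠ 0) : 0 < y ⬝ᵥ (gramian A B T₀ *ᵥ y) := by
  have hqe : ∀ t, y ⬝ᵥ (Ff A B t *ᵥ y) = ∑ k, ((Bᵀ *ᵥ (Gg A t *ᵥ y)) k)^2 :=
    fun t => quad_point A B t y
  have hqc : Continuous fun t => y ⬝ᵥ (Ff A B t *ᵥ y) := by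
    have : (fun t => y ⬝ᵥ (Ff A B t *ᵥ y)) = fun t => ∑ i, y i * (Ff A B t *ᵥ y) i := by
      funext t; rfl
    rw [this]
    exact continuous_finset_sum _ fun i _ => continuous_const.mul (continuous_Ffv A B y i)
  have hq0 : ∀ t, 0 ≤ y ⬝ᵥ (Ff A B t *ᵥ y) := fun t => by
    rw [hqe t]; exact Finset.sum_nonneg fun k _ => sq_nonneg _
  rw [quad]
  have hnn : 0 ≤ ∫ t in (0:ℝ)..T₀, y ⬝ᵥ (Ff A B t *ᵥ y) :=
    intervalIntegral.integral_nonneg hT.le (fun u _ => hq0 u)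
  rcases hnn.lt_or_eq with h | h
  · exact h
  exfalso
  have hzero := integrand_zero_on_Ioo hT hqc hq0 h.symm
  have hg : ∀ t ∈ Set.Ioo (0:ℝ) T₀, Bᵀ *ᵥ (Gg A t *ᵥ y) = 0 := by
    intro t ht
    have hz := hzero t ht
    rw [hqe t] at hz
    funext k
    have := (Finset.sum_eq_zero_iff_of_nonneg (fun k _ => sq_nonneg _)).1 hz k (Finset.mem_univ k)
    exact pow_eq_zero_iff two_ne_zero |>.1 this
  have hker : ∀ k : ℕ, ∀ t ∈ Set.Ioo (0:ℝ) T₀, (Bᵀ * (Aᵀ)^k) *ᵥ (Gg A t *ᵥ y) = 0 := by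
    intro k
    induction k with
    | zero => intro t ht; simpa using hg t ht
    | succ k ih =>
      intro t ht
      funext j
      have hd := hasDerivAt_PG A (Bᵀ * (Aᵀ)^k) y j t
      have hzero' : (fun s => ((Bᵀ * (Aᵀ)^k) *ᵥ (Gg A s *ᵥ y)) j) =ᶠ[nhds t] (fun _ => 0) := by
        filter_upwards [Ioo_mem_nhds ht.1 ht.2] with s hs
        rw [ih s hs]; rfl
      have hd0 : HasDerivAt (fun _ : ℝ => (0:ℝ))
          (-(((Bᵀ * (Aᵀ)^k * Aᵀ) *ᵥ (Gg A t *ᵥ y)) j)) t :=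
        hd.congr_of_eventuallyEq hzero'.symm
      have huniq := (hasDerivAt_const t (0:ℝ)).unique hd0
      have : ((Bᵀ * (Aᵀ)^(k+1)) *ᵥ (Gg A t *ᵥ y)) j = 0 := by
        rw [pow_succ, ← Matrix.mul_assoc]
        linarith
      simpa using this
  set t₀ := T₀ / 2 with ht₀def
  have ht₀ : t₀ ∈ Set.Ioo (0:ℝ) T₀ := ⟨by positivity, by rw [ht₀def]; linarith⟩
  set z := Gg A t₀ *ᵥ y with hzdef
  have hzne : z ≠ 0 := by
    intro hz0
    apply hy
    have h1 := expGg_inv A t₀ y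
    rw [← hzdef, hz0, Matrix.mulVec_zero] at h1
    exact h1.symm
  have hvm : z ᵥ* ctrbMat A B = 0 := by
    funext p
    have htr : Bᵀ * (Aᵀ)^(p.1 : ℕ) = (A^(p.1 : ℕ) * B)ᵀ := by
      rw [Matrix.transpose_mul, Matrix.transpose_pow]
    have h := congrFun (hker (p.1 : ℕ) t₀ ht₀) p.2
    rw [htr, Matrix.mulVec_transpose] at h
    simpa [Matrix.vecMul, dotProduct, ctrbMat] using h
  have := rank_lt_of_vecMul_eq_zero hzne hvm
  omega


section ComplexHelpers

lemma mc_mul {a b c : ℕ} (M : Matrix (Fin a) (Fin b) ℝ) (N : Matrix (Fin b) (Fin c) ℝ) :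
    (M * N).map Complex.ofReal = M.map Complex.ofReal * N.map Complex.ofReal := by
  ext i j
  simp only [Matrix.map_apply, Matrix.mul_apply]
  push_cast
  rfl

lemma mc_one {a : ℕ} : (1 : Matrix (Fin a) (Fin a) ℝ).map Complex.ofReal = 1 := by
  ext i j
  by_cases h : i = j <;> simp [Matrix.one_apply, h]

lemma mc_sub {a b : ℕ} (M N : Matrix (Fin a) (Fin b) ℝ) :
    (M - N).map Complex.ofReal = M.map Complex.ofReal - N.map Complex.ofReal := by
  ext i j; simp [Matrix.map_apply]

lemma mc_transpose {a b : ℕ} (M : Matrix (Fin a) (Fin b) ℝ) :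
    (Mᵀ).map Complex.ofReal = (M.map Complex.ofReal)ᵀ := by
  ext i j; simp [Matrix.map_apply]

lemma mc_pow {a : ℕ} (M : Matrix (Fin a) (Fin a) ℝ) (k : ℕ) :
    (M ^ k).map Complex.ofReal = (M.map Complex.ofReal) ^ k := by
  induction k with
  | zero => simpa using mc_one
  | succ k ih => rw [pow_succ, pow_succ, mc_mul, ih]

lemma mc_dot {a b : ℕ} (S : Matrix (Fin a) (Fin b) ℝ) (u : Fin a → ℝ) (w : Fin b → ℝ) :
    (fun i => ((u i : ℂ))) ⬝ᵥ (S.map Complex.ofReal *ᵥ fun i => ((w i : ℂ)))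
      = ((u ⬝ᵥ (S *ᵥ w) : ℝ) : ℂ) := by
  simp only [dotProduct, Matrix.mulVec, Matrix.map_apply]
  push_cast
  rfl

lemma mulVec_map_re_im {a b : ℕ} (S : Matrix (Fin a) (Fin b) ℝ) (x : Fin b → ℂ) (j : Fin a) :
    ((S.map Complex.ofReal *ᵥ x) j).re = (S *ᵥ fun i => (x i).re) j
      ∧ ((S.map Complex.ofReal *ᵥ x) j).im = (S *ᵥ fun i => (x i).im) j := by
  constructor <;>
  · simp only [Matrix.mulVec, dotProduct, Matrix.map_apply, Complex.re_sum,
      Complex.im_sum, Complex.mul_re, Complex.mul_im, Complex.ofReal_re, Complex.ofReal_im]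
    simp

lemma mulVec_map_eq_zero_iff {a b : ℕ} (S : Matrix (Fin a) (Fin b) ℝ) (x : Fin b → ℂ) :
    S.map Complex.ofReal *ᵥ x = 0
      ↔ (S *ᵥ fun i => (x i).re) = 0 ∧ (S *ᵥ fun i => (x i).im) = 0 := by
  constructor
  · intro h
    constructor <;> (funext j; have hj := congrFun h j)
    · rw [← (mulVec_map_re_im S x j).1, hj]; rfl
    · rw [← (mulVec_map_re_im S x j).2, hj]; rfl
  · rintro ⟨h1, h2⟩
    funext j
    have e1 := (mulVec_map_re_im S x j).1
    have e2 := (mulVec_map_re_im S x j).2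
    rw [h1] at e1; rw [h2] at e2
    apply Complex.ext
    · simpa using e1
    · simpa using e2

lemma star_mulVec_real {a b : ℕ} (S : Matrix (Fin a) (Fin b) ℝ) (x : Fin b → ℂ) :
    S.map Complex.ofReal *ᵥ (star x) = star (S.map Complex.ofReal *ᵥ x) := by
  funext j
  simp only [Matrix.mulVec, dotProduct, Pi.star_apply, star_sum, star_mul',
    Matrix.map_apply, Complex.star_def, Complex.conj_ofReal]

lemma dot_symm {a : ℕ} {S : Matrix (Fin a) (Fin a) ℝ} (hS : Sᵀ = S) (u w : Fin a → ℝ) :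
    u ⬝ᵥ (S *ᵥ w) = w ⬝ᵥ (S *ᵥ u) := by
  rw [Matrix.dotProduct_mulVec]
  conv_lhs => rw [← hS]
  rw [Matrix.vecMul_transpose, dotProduct_comm]

lemma herm_quad {a : ℕ} (S : Matrix (Fin a) (Fin a) ℝ) (hS : Sᵀ = S) (x : Fin a → ℂ) :
    star x ⬝ᵥ (S.map Complex.ofReal *ᵥ x)
      = ((((fun i => (x i).re) ⬝ᵥ (S *ᵥ fun i => (x i).re)
         + (fun i => (x i).im) ⬝ᵥ (S *ᵥ fun i => (x i).im)) : ℝ) : ℂ) := by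
  set u : Fin a → ℝ := fun i => (x i).re with hu
  set w : Fin a → ℝ := fun i => (x i).im with hw
  set xu : Fin a → ℂ := fun i => ((u i : ℂ)) with hxu
  set xw : Fin a → ℂ := fun i => ((w i : ℂ)) with hxw
  have hx : x = xu + Complex.I • xw := by
    funext i
    simp only [hxu, hxw, Pi.add_apply, Pi.smul_apply, smul_eq_mul]
    rw [mul_comm]
    exact (Complex.re_add_im (x i)).symm
  have hsx : star x = xu - Complex.I • xw := by
    funext i
    simp only [Pi.star_apply, Pi.sub_apply, Pi.smul_apply, smul_eq_mul, hxu, hxw]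
    apply Complex.ext <;> simp [hu, hw]
  have e1 : xu ⬝ᵥ (S.map Complex.ofReal *ᵥ xu) = ((u ⬝ᵥ (S *ᵥ u) : ℝ) : ℂ) := mc_dot S u u
  have e2 : xu ⬝ᵥ (S.map Complex.ofReal *ᵥ xw) = ((u ⬝ᵥ (S *ᵥ w) : ℝ) : ℂ) := mc_dot S u w
  have e3 : xw ⬝ᵥ (S.map Complex.ofReal *ᵥ xu) = ((w ⬝ᵥ (S *ᵥ u) : ℝ) : ℂ) := mc_dot S w u
  have e4 : xw ⬝ᵥ (S.map Complex.ofReal *ᵥ xw) = ((w ⬝ᵥ (S *ᵥ w) : ℝ) : ℂ) := mc_dot S w w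
  rw [hsx, hx]
  simp only [Matrix.mulVec_add, Matrix.mulVec_smul, sub_dotProduct,
    dotProduct_add, smul_dotProduct, dotProduct_smul,
    e1, e2, e3, e4, smul_eq_mul]
  rw [dot_symm hS w u]
  push_cast
  ring_nf
  rw [Complex.I_sq]
  ring

lemma dot_PPT {a b : ℕ} (P : Matrix (Fin a) (Fin b) ℝ) (y : Fin a → ℝ) :
    y ⬝ᵥ ((P * Pᵀ) *ᵥ y) = ∑ k, ((Pᵀ *ᵥ y) k)^2 := by
  rw [← Matrix.mulVec_mulVec, Matrix.dotProduct_mulVec]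
  have : y ᵥ* P = Pᵀ *ᵥ y := (Matrix.mulVec_transpose _ _).symm
  rw [this]
  simp [dotProduct, pow_two]

end ComplexHelpers

lemma mc_add {a b : ℕ} (M N : Matrix (Fin a) (Fin b) ℝ) :
    (M + N).map Complex.ofReal = M.map Complex.ofReal + N.map Complex.ofReal := by
  ext i j; simp [Matrix.map_apply]

lemma mc_neg {a b : ℕ} (M : Matrix (Fin a) (Fin b) ℝ) :
    (-M).map Complex.ofReal = -(M.map Complex.ofReal) := by
  ext i j; simp [Matrix.map_apply]

lemma vec_zero_of_sum_sq {p : ℕ} {w : Fin p → ℝ} (h : (∑ k, (w k)^2) = 0) : w = 0 := by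
  funext k
  have := (Finset.sum_eq_zero_iff_of_nonneg (fun k _ => sq_nonneg (w k))).1 h k (Finset.mem_univ k)
  exact pow_eq_zero_iff two_ne_zero |>.1 this

end CLSProof

set_option maxHeartbeats 1000000 in
theorem closedLoop_stable_of_controllable {n m : ℕ}
    (A : Matrix (Fin n) (Fin n) ℝ) (B : Matrix (Fin n) (Fin m) ℝ)
    (hctrb : (ctrbMat A B).rank = n) (T₀ : ℝ) (hT : 0 < T₀) :
    IsStableMatrix (A - B * Bᵀ * (gramian A B T₀)⁻¹) := by
  intro μ v hv hMv
  classical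
  set W : Matrix (Fin n) (Fin n) ℝ := gramian A B T₀ with hWdef
  have hWsymm : Wᵀ = W := CLSProof.gramian_symm A B T₀
  have hdet : IsUnit W.det := by
    rw [isUnit_iff_ne_zero]
    intro hdet0
    obtain ⟨y, hy, hy0⟩ := Matrix.exists_mulVec_eq_zero_iff.2 hdet0
    have hpos := CLSProof.gramian_posdef A B hT hctrb y hy
    rw [← hWdef, hy0, dotProduct_zero] at hpos
    exact lt_irrefl _ hpos
  have hWWi : W * W⁻¹ = 1 := Matrix.mul_nonsing_inv _ hdet
  have hWiW : W⁻¹ * W = 1 := Matrix.nonsing_inv_mul _ hdet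
  have hWit : (W⁻¹)ᵀ = W⁻¹ := by rw [Matrix.transpose_nonsing_inv, hWsymm]
  set C : Matrix (Fin n) (Fin n) ℝ := B * Bᵀ with hCdef
  have hCsymm : Cᵀ = C := by rw [hCdef, Matrix.transpose_mul, Matrix.transpose_transpose]
  set P₂ : Matrix (Fin n) (Fin m) ℝ := CLSProof.Ee A T₀ * B with hP2
  have hFfeq : CLSProof.Ff A B T₀ = P₂ * P₂ᵀ := CLSProof.Ff_eq A B T₀
  have hF2symm : (P₂ * P₂ᵀ)ᵀ = P₂ * P₂ᵀ := by
    rw [Matrix.transpose_mul, Matrix.transpose_transpose]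
  set M : Matrix (Fin n) (Fin n) ℝ := A - C * W⁻¹ with hMdef
  have hlyap : A * W + W * Aᵀ = C - P₂ * P₂ᵀ := by
    rw [← hFfeq, hWdef]; exact CLSProof.lyap A B T₀
  have e1 : M * W = A * W - C := by
    rw [hMdef, Matrix.sub_mul, Matrix.mul_assoc, hWiW, Matrix.mul_one]
  have e2 : W * Mᵀ = W * Aᵀ - C := by
    rw [hMdef, Matrix.transpose_sub, Matrix.mul_sub, Matrix.transpose_mul, hWit, hCsymm,
      ← Matrix.mul_assoc, hWWi, Matrix.one_mul]
  have hlyapM : M * W + W * Mᵀ = -(C + P₂ * P₂ᵀ) := by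
    rw [e1, e2]
    calc A * W - C + (W * Aᵀ - C) = (A * W + W * Aᵀ) - C - C := by abel
    _ = (C - P₂ * P₂ᵀ) - C - C := by rw [hlyap]
    _ = -(C + P₂ * P₂ᵀ) := by abel
  -- complexification
  set x : Fin n → ℂ := (W⁻¹.map Complex.ofReal) *ᵥ v with hxdef
  have hWx : (W.map Complex.ofReal) *ᵥ x = v := by
    rw [hxdef, Matrix.mulVec_mulVec, ← CLSProof.mc_mul, hWWi, CLSProof.mc_one, Matrix.one_mulVec]
  have hxne : x ≠ 0 := fun h => hv (by rw [← hWx, h, Matrix.mulVec_zero])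
  set a : Fin n → ℝ := fun i => (x i).re with hadef
  set b : Fin n → ℝ := fun i => (x i).im with hbdef
  have hab : a ≠ 0 ∨ b ≠ 0 := by
    by_contra h
    push_neg at h
    apply hxne
    funext i
    apply Complex.ext
    · simpa using congrFun h.1 i
    · simpa using congrFun h.2 i
  set s : ℝ := a ⬝ᵥ (W *ᵥ a) + b ⬝ᵥ (W *ᵥ b) with hsdef
  have hW0 : ∀ y : Fin n → ℝ, 0 ≤ y ⬝ᵥ (W *ᵥ y) := by
    intro y
    rcases eq_or_ne y 0 with h | h
    · simp [h]
    · exact (CLSProof.gramian_posdef A B hT hctrb y h).le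
  have hs_pos : 0 < s := by
    rcases hab with h | h
    · have h1 := CLSProof.gramian_posdef A B hT hctrb a h
      have h2 := hW0 b
      rw [← hWdef] at h1
      rw [hsdef]; linarith
    · have h1 := CLSProof.gramian_posdef A B hT hctrb b h
      have h2 := hW0 a
      rw [← hWdef] at h1
      rw [hsdef]; linarith
  have hσ : star x ⬝ᵥ (W.map Complex.ofReal *ᵥ x) = (s : ℂ) := by
    have h := CLSProof.herm_quad W hWsymm x
    rw [← hadef, ← hbdef, ← hsdef] at h
    exact h
  have hσv : star x ⬝ᵥ v = (s : ℂ) := by rw [← hWx]; exact hσ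
  -- terms
  have hterm1v : ((M.map Complex.ofReal) * (W.map Complex.ofReal)) *ᵥ x = μ • v := by
    rw [← Matrix.mulVec_mulVec, hWx, hMv]
  have hterm1 : star x ⬝ᵥ ((((M.map Complex.ofReal) * (W.map Complex.ofReal))) *ᵥ x)
      = μ * (s : ℂ) := by
    rw [hterm1v, dotProduct_smul, hσv, smul_eq_mul]
  have hcWsymm : (W.map Complex.ofReal)ᵀ = W.map Complex.ofReal := by
    rw [← CLSProof.mc_transpose, hWsymm]
  have hNt : (W.map Complex.ofReal) * (M.map Complex.ofReal)ᵀ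
      = (((M.map Complex.ofReal) * (W.map Complex.ofReal)))ᵀ := by
    rw [Matrix.transpose_mul, hcWsymm]
  have hNsx : ((M.map Complex.ofReal) * (W.map Complex.ofReal)) *ᵥ star x
      = star (((M.map Complex.ofReal) * (W.map Complex.ofReal)) *ᵥ x) := by
    rw [← CLSProof.mc_mul]
    exact CLSProof.star_mulVec_real (M * W) x
  have hdotstar : star v ⬝ᵥ x = star (star x ⬝ᵥ v) := by
    simp only [dotProduct, star_sum, star_mul', star_star, Pi.star_apply]
    exact Finset.sum_congr rfl fun i _ => mul_comm _ _
  have hterm2 : star x ⬝ᵥ (((W.map Complex.ofReal) * (M.map Complex.ofReal)ᵀ) *ᵥ x)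
      = (starRingEnd ℂ) μ * (s : ℂ) := by
    rw [hNt, Matrix.dotProduct_mulVec, Matrix.vecMul_transpose, hNsx, hterm1v, star_smul,
      smul_dotProduct, hdotstar, hσv]
    simp
  -- complex Lyapunov
  have hclyapC : (M.map Complex.ofReal) * (W.map Complex.ofReal)
      + (W.map Complex.ofReal) * (M.map Complex.ofReal)ᵀ
      = -((C.map Complex.ofReal)
        + (P₂.map Complex.ofReal) * (P₂.map Complex.ofReal)ᵀ) := by
    rw [← CLSProof.mc_mul, ← CLSProof.mc_transpose, ← CLSProof.mc_mul, ← CLSProof.mc_add,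
      ← CLSProof.mc_transpose, ← CLSProof.mc_mul, ← CLSProof.mc_add, ← CLSProof.mc_neg, hlyapM]
  have hqCa := CLSProof.dot_PPT B a
  have hqCb := CLSProof.dot_PPT B b
  have hqFa := CLSProof.dot_PPT P₂ a
  have hqFb := CLSProof.dot_PPT P₂ b
  set qC : ℝ := a ⬝ᵥ (C *ᵥ a) + b ⬝ᵥ (C *ᵥ b) with hqCdef
  set qF : ℝ := a ⬝ᵥ ((P₂ * P₂ᵀ) *ᵥ a) + b ⬝ᵥ ((P₂ * P₂ᵀ) *ᵥ b) with hqFdef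
  have hqC_eq : star x ⬝ᵥ ((C.map Complex.ofReal) *ᵥ x) = (qC : ℂ) := by
    have h := CLSProof.herm_quad C hCsymm x
    rw [← hadef, ← hbdef, ← hqCdef] at h
    exact h
  have hqF_eq : star x ⬝ᵥ (((P₂.map Complex.ofReal) * (P₂.map Complex.ofReal)ᵀ) *ᵥ x)
      = (qF : ℂ) := by
    have h := CLSProof.herm_quad (P₂ * P₂ᵀ) hF2symm x
    rw [← hadef, ← hbdef, ← hqFdef] at h
    rw [← CLSProof.mc_transpose, ← CLSProof.mc_mul]
    exact h
  have hmain : μ * (s : ℂ) + (starRingEnd ℂ) μ * (s : ℂ) = -((qC : ℂ) + (qF : ℂ)) := by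
    have h := congrArg (fun N => star x ⬝ᵥ (N *ᵥ x)) hclyapC
    simp only [Matrix.add_mulVec, Matrix.neg_mulVec, dotProduct_add,
      dotProduct_neg] at h
    rw [hterm1, hterm2, hqC_eq, hqF_eq] at h
    exact h
  have hreal : 2 * μ.re * s = -(qC + qF) := by
    have h2 : ((2 * μ.re * s : ℝ) : ℂ) = ((-(qC + qF) : ℝ) : ℂ) := by
      push_cast
      rw [← hmain]
      rw [← add_mul, Complex.add_conj]
      push_cast
      ring
    exact_mod_cast h2
  have hqC0 : 0 ≤ qC := by
    rw [hqCdef, hCdef, hqCa, hqCb]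
    exact add_nonneg (Finset.sum_nonneg fun k _ => sq_nonneg _)
      (Finset.sum_nonneg fun k _ => sq_nonneg _)
  have hqF0 : 0 ≤ qF := by
    rw [hqFdef, hqFa, hqFb]
    exact add_nonneg (Finset.sum_nonneg fun k _ => sq_nonneg _)
      (Finset.sum_nonneg fun k _ => sq_nonneg _)
  -- conclude μ.re ≤ 0 with equality impossible
  rcases lt_or_ge μ.re 0 with hneg | hge
  · exact hneg
  exfalso
  have hre0 : μ.re = 0 := by nlinarith
  have hq0 : qC = 0 ∧ qF = 0 := by constructor <;> nlinarith
  have hBa : Bᵀ *ᵥ a = 0 := by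
    apply CLSProof.vec_zero_of_sum_sq
    rw [← hqCa]
    have h2 : 0 ≤ b ⬝ᵥ ((B * Bᵀ) *ᵥ b) := by
      rw [hqCb]; exact Finset.sum_nonneg fun k _ => sq_nonneg _
    have h3 : 0 ≤ a ⬝ᵥ ((B * Bᵀ) *ᵥ a) := by
      rw [hqCa]; exact Finset.sum_nonneg fun k _ => sq_nonneg _
    have hzq := hq0.1
    rw [hqCdef, hCdef] at hzq
    linarith
  have hBb : Bᵀ *ᵥ b = 0 := by
    apply CLSProof.vec_zero_of_sum_sq
    rw [← hqCb]
    have h2 : 0 ≤ b ⬝ᵥ ((B * Bᵀ) *ᵥ b) := by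
      rw [hqCb]; exact Finset.sum_nonneg fun k _ => sq_nonneg _
    have h3 : 0 ≤ a ⬝ᵥ ((B * Bᵀ) *ᵥ a) := by
      rw [hqCa]; exact Finset.sum_nonneg fun k _ => sq_nonneg _
    have hzq := hq0.1
    rw [hqCdef, hCdef] at hzq
    linarith
  have hPa : P₂ᵀ *ᵥ a = 0 := by
    apply CLSProof.vec_zero_of_sum_sq
    rw [← hqFa]
    have h2 : 0 ≤ b ⬝ᵥ ((P₂ * P₂ᵀ) *ᵥ b) := by rw [hqFb]; exact Finset.sum_nonneg fun k _ => sq_nonneg _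
    have h3 : 0 ≤ a ⬝ᵥ ((P₂ * P₂ᵀ) *ᵥ a) := by rw [hqFa]; exact Finset.sum_nonneg fun k _ => sq_nonneg _
    have := hq0.2
    rw [hqFdef] at this
    linarith
  have hPb : P₂ᵀ *ᵥ b = 0 := by
    apply CLSProof.vec_zero_of_sum_sq
    rw [← hqFb]
    have h2 : 0 ≤ b ⬝ᵥ ((P₂ * P₂ᵀ) *ᵥ b) := by rw [hqFb]; exact Finset.sum_nonneg fun k _ => sq_nonneg _
    have h3 : 0 ≤ a ⬝ᵥ ((P₂ * P₂ᵀ) *ᵥ a) := by rw [hqFa]; exact Finset.sum_nonneg fun k _ => sq_nonneg _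
    have := hq0.2
    rw [hqFdef] at this
    linarith
  have hBx : (Bᵀ.map Complex.ofReal) *ᵥ x = 0 := by
    apply (CLSProof.mulVec_map_eq_zero_iff Bᵀ x).2
    rw [← hadef, ← hbdef]
    exact ⟨hBa, hBb⟩
  have hPx : (P₂ᵀ.map Complex.ofReal) *ᵥ x = 0 := by
    apply (CLSProof.mulVec_map_eq_zero_iff P₂ᵀ x).2
    rw [← hadef, ← hbdef]
    exact ⟨hPa, hPb⟩
  have hCx : (C.map Complex.ofReal) *ᵥ x = 0 := by
    rw [hCdef, CLSProof.mc_mul, ← Matrix.mulVec_mulVec, hBx, Matrix.mulVec_zero]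
  have hFx : ((P₂ * P₂ᵀ).map Complex.ofReal) *ᵥ x = 0 := by
    rw [CLSProof.mc_mul, ← Matrix.mulVec_mulVec, hPx, Matrix.mulVec_zero]
  have hAv : (A.map Complex.ofReal) *ᵥ v = μ • v := by
    have h := hMv
    rw [hMdef, CLSProof.mc_sub, Matrix.sub_mulVec, CLSProof.mc_mul,
      ← Matrix.mulVec_mulVec] at h
    rw [← hxdef, hCx, sub_zero] at h
    exact h
  have hWiWc : (W⁻¹.map Complex.ofReal) * (W.map Complex.ofReal) = 1 := by
    rw [← CLSProof.mc_mul, hWiW, CLSProof.mc_one]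
  have hAtx : (Aᵀ.map Complex.ofReal) *ᵥ x = (-μ) • x := by
    have h := congrArg (fun N => (N.map Complex.ofReal) *ᵥ x) hlyap
    simp only [CLSProof.mc_add, CLSProof.mc_sub] at h
    rw [CLSProof.mc_mul A W, CLSProof.mc_mul W Aᵀ, Matrix.add_mulVec, Matrix.sub_mulVec,
      ← Matrix.mulVec_mulVec, ← Matrix.mulVec_mulVec, hWx, hAv, hCx, hFx, sub_zero] at h
    have h2 : (W.map Complex.ofReal) *ᵥ ((Aᵀ.map Complex.ofReal) *ᵥ x) = -(μ • v) :=
      eq_neg_of_add_eq_zero_right h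
    have hcancel : ∀ z : Fin n → ℂ,
        (W⁻¹.map Complex.ofReal) *ᵥ ((W.map Complex.ofReal) *ᵥ z) = z := by
      intro z; rw [Matrix.mulVec_mulVec, hWiWc, Matrix.one_mulVec]
    have h4 : (Aᵀ.map Complex.ofReal) *ᵥ x
        = (W⁻¹.map Complex.ofReal) *ᵥ (-(μ • v)) := by
      rw [← hcancel ((Aᵀ.map Complex.ofReal) *ᵥ x), h2]
    rw [h4, Matrix.mulVec_neg, Matrix.mulVec_smul, ← hxdef, neg_smul]
  have hpow : ∀ k : ℕ, ((Aᵀ.map Complex.ofReal)^k) *ᵥ x = ((-μ)^k) • x := by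
    intro k; induction k with
    | zero => simp
    | succ k ih =>
      rw [pow_succ, ← Matrix.mulVec_mulVec, hAtx, Matrix.mulVec_smul, ih, smul_smul,
        ← pow_succ']
  have hBk : ∀ k : ℕ, ((Bᵀ * Aᵀ^k).map Complex.ofReal) *ᵥ x = 0 := by
    intro k
    rw [CLSProof.mc_mul, CLSProof.mc_pow, ← Matrix.mulVec_mulVec, hpow,
      Matrix.mulVec_smul, hBx, smul_zero]
  have hctrb_ann : ∀ y0 : Fin n → ℝ, (∀ k : ℕ, (Bᵀ * Aᵀ^k) *ᵥ y0 = 0) → y0 ≠ 0 → False := by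
    intro y0 hk hy0
    have hvm : y0 ᵥ* ctrbMat A B = 0 := by
      funext p
      have htr : Bᵀ * (Aᵀ)^(p.1 : ℕ) = (A^(p.1 : ℕ) * B)ᵀ := by
        rw [Matrix.transpose_mul, Matrix.transpose_pow]
      have h := congrFun (hk (p.1 : ℕ)) p.2
      rw [htr, Matrix.mulVec_transpose] at h
      simpa [Matrix.vecMul, dotProduct, ctrbMat] using h
    have := CLSProof.rank_lt_of_vecMul_eq_zero hy0 hvm
    omega
  rcases hab with h | h
  · refine hctrb_ann a (fun k => ?_) h
    have := ((CLSProof.mulVec_map_eq_zero_iff (Bᵀ * Aᵀ^k) x).1 (hBk k)).1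
    rw [← hadef] at this
    exact this
  · refine hctrb_ann b (fun k => ?_) h
    have := ((CLSProof.mulVec_map_eq_zero_iff (Bᵀ * Aᵀ^k) x).1 (hBk k)).2
    rw [← hbdef] at this
    exact this
end

section
/- Let A ∈ ℝ^{n×n}, B ∈ ℝ^{n×m}, T₀ > 0, and W = ∫₀^{T₀} e^{-At} B Bᵀ e^{-Aᵀt} dt. Then (A - B Bᵀ W^{-1}) W + W (A - B Bᵀ W^{-1})ᵀ = -B Bᵀ - e^{-A T₀} B Bᵀ e^{-Aᵀ T₀}, assuming W is invertible. -/
open Matrix MeasureTheory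

section Aux

open NormedSpace

attribute [local instance] Matrix.linftyOpNormedRing Matrix.linftyOpNormedAlgebra

/-- entry evaluation as a continuous linear map -/
noncomputable def entryCLM {n : ℕ} (i j : Fin n) : Matrix (Fin n) (Fin n) ℝ →L[ℝ] ℝ :=
  LinearMap.toContinuousLinearMap
    { toFun := fun M => M i j, map_add' := fun _ _ => rfl, map_smul' := fun _ _ => rfl }

theorem gramian_lyapunov_identity {n m : ℕ}
    (A : Matrix (Fin n) (Fin n) ℝ) (B : Matrix (Fin n) (Fin m) ℝ)
    (T₀ : ℝ) (hT : 0 < T₀) (hW : IsUnit (gramian A B T₀).det) :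
    (A - B * Bᵀ * (gramian A B T₀)⁻¹) * gramian A B T₀
      + gramian A B T₀ * (A - B * Bᵀ * (gramian A B T₀)⁻¹)ᵀ
    = -(B * Bᵀ)
      - NormedSpace.exp ((-T₀) • A) * B * Bᵀ * NormedSpace.exp ((-T₀) • Aᵀ) := by
  set C : Matrix (Fin n) (Fin n) ℝ := B * Bᵀ with hCdef
  have hCsymm : Cᵀ = C := by
    rw [hCdef, Matrix.transpose_mul, Matrix.transpose_transpose]
  set M : ℝ → Matrix (Fin n) (Fin n) ℝ :=
    fun t => exp (t • (-A)) * C * exp (t • (-Aᵀ)) with hMdef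
  have hMd : ∀ t : ℝ, HasDerivAt M (-(A * M t + M t * Aᵀ)) t := by
    intro t
    have h1 := (((hasDerivAt_exp_smul_const' (-A) t)).mul_const C).mul
      (hasDerivAt_exp_smul_const (-Aᵀ) t)
    exact h1.congr_deriv (by simp only [hMdef]; noncomm_ring)
  have hMcont : Continuous M :=
    continuous_iff_continuousAt.2 fun t => (hMd t).continuousAt
  letI : ENormedAddMonoid (Matrix (Fin n) (Fin n) ℝ) := NormedAddGroup.toENormedAddMonoid
  have hMint : IntervalIntegrable M volume 0 T₀ := hMcont.intervalIntegrable _ _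
  have hDcont : Continuous fun t => A * M t + M t * Aᵀ := by fun_prop
  have hFTC : ∫ t in (0:ℝ)..T₀, -(A * M t + M t * Aᵀ) = M T₀ - M 0 :=
    intervalIntegral.integral_eq_sub_of_hasDerivAt (fun t _ => hMd t)
      (hDcont.neg.intervalIntegrable _ _)
  have h1 : (∫ t in (0:ℝ)..T₀, A * M t) = A * ∫ t in (0:ℝ)..T₀, M t :=
    (LinearMap.toContinuousLinearMap (LinearMap.mulLeft ℝ A)).intervalIntegral_comp_comm hMint
  have h2 : (∫ t in (0:ℝ)..T₀, M t * Aᵀ) = (∫ t in (0:ℝ)..T₀, M t) * Aᵀ :=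
    (LinearMap.toContinuousLinearMap (LinearMap.mulRight ℝ Aᵀ)).intervalIntegral_comp_comm hMint
  have hM0 : M 0 = C := by simp [hMdef]
  have hkey : A * (∫ t in (0:ℝ)..T₀, M t) + (∫ t in (0:ℝ)..T₀, M t) * Aᵀ
      = C - M T₀ := by
    rw [← h1, ← h2, ← intervalIntegral.integral_add
        (((continuous_const.matrix_mul hMcont).intervalIntegrable _ _))
        ((hMcont.matrix_mul continuous_const).intervalIntegrable _ _),
      ← hM0, ← neg_sub (M T₀) (M 0), ← hFTC, intervalIntegral.integral_neg, neg_neg]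
  -- identify the gramian with the matrix-valued integral
  have hgram : gramian A B T₀ = ∫ t in (0:ℝ)..T₀, M t := by
    ext i j
    show (∫ t in (0:ℝ)..T₀,
        (exp ((-t) • A) * B * Bᵀ * exp ((-t) • Aᵀ)) i j) = _
    show _ = (entryCLM i j) (∫ t in (0:ℝ)..T₀, M t)
    erw [← (entryCLM i j).intervalIntegral_comp_comm hMint]
    refine intervalIntegral.integral_congr fun t _ => ?_
    show (exp ((-t) • A) * B * Bᵀ * exp ((-t) • Aᵀ)) i j = M t i j
    rw [hMdef]
    simp only [neg_smul, smul_neg, hCdef, Matrix.mul_assoc]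
  -- symmetry of the integrand and of the gramian
  have hMsymm : ∀ t : ℝ, (M t)ᵀ = M t := by
    intro t
    have hY : exp (t • (-Aᵀ)) = (exp (t • (-A)))ᵀ := by
      rw [← Matrix.exp_transpose, Matrix.transpose_smul, Matrix.transpose_neg]
    rw [hMdef]
    simp only [hY, Matrix.transpose_mul, Matrix.transpose_transpose, hCsymm, Matrix.mul_assoc]
  have hsymm : (gramian A B T₀)ᵀ = gramian A B T₀ := by
    rw [hgram]
    ext i j
    show (entryCLM j i) (∫ t in (0:ℝ)..T₀, M t) = (entryCLM i j) (∫ t in (0:ℝ)..T₀, M t)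
    erw [← (entryCLM j i).intervalIntegral_comp_comm hMint,
      ← (entryCLM i j).intervalIntegral_comp_comm hMint]
    refine intervalIntegral.integral_congr fun t _ => ?_
    show M t j i = M t i j
    conv_lhs => rw [← hMsymm t]
    rfl
  -- final algebra
  set W : Matrix (Fin n) (Fin n) ℝ := gramian A B T₀ with hWdef
  have hinv1 : W * W⁻¹ = 1 := Matrix.mul_nonsing_inv _ hW
  have hinv2 : W⁻¹ * W = 1 := Matrix.nonsing_inv_mul _ hW
  have hAW : A * W + W * Aᵀ = C - M T₀ := by rw [hgram]; exact hkey
  have hTr : (A - C * W⁻¹)ᵀ = Aᵀ - W⁻¹ * C := by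
    rw [Matrix.transpose_sub, Matrix.transpose_mul, Matrix.transpose_nonsing_inv, hsymm, hCsymm]
  have expand : (A - C * W⁻¹) * W + W * (A - C * W⁻¹)ᵀ
      = (A * W + W * Aᵀ) - C * (W⁻¹ * W) - (W * W⁻¹) * C := by
    rw [hTr]
    noncomm_ring
  rw [expand, hAW, hinv1, hinv2, mul_one, one_mul]
  have hMT : M T₀ = exp ((-T₀) • A) * B * Bᵀ * exp ((-T₀) • Aᵀ) := by
    rw [hMdef]
    simp only [neg_smul, smul_neg, hCdef, Matrix.mul_assoc]
  rw [hMT]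
  abel

end Aux
end

section
/- Let A ∈ ℝ^{n×n}, B ∈ ℝ^{n×m} with (A,B) controllable. If v ∈ ℂⁿ is nonzero and satisfies Aᵀ v = λ v for some λ ∈ ℂ and Bᵀ v = 0, then a contradiction follows; i.e., no nonzero common left eigenvector of A lies in the kernel of Bᵀ (the PBH test, one direction). -/
open Matrix

/-- PBH test (one direction): a controllable pair admits no nonzero common left
eigenvector of `A` lying in the kernel of `Bᵀ`. -/
theorem pbh_no_common_left_eigenvector {n m : ℕ}
    (A : Matrix (Fin n) (Fin n) ℝ) (B : Matrix (Fin n) (Fin m) ℝ)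
    (hctrb : (ctrbMat A B).rank = n)
    (v : Fin n → ℂ) (hv : v ≠ 0) (lam : ℂ)
    (heig : (Aᵀ.map (Complex.ofReal)) *ᵥ v = lam • v)
    (hker : (Bᵀ.map (Complex.ofReal)) *ᵥ v = 0) :
    False := by
  have hA : v ᵥ* (A.map Complex.ofReal) = lam • v := by
    rw [← Matrix.mulVec_transpose, ← Matrix.transpose_map]; exact heig
  have hB : v ᵥ* (B.map Complex.ofReal) = 0 := by
    rw [← Matrix.mulVec_transpose, ← Matrix.transpose_map]; exact hker
  have hmap : ∀ k : ℕ, (A ^ k).map Complex.ofReal = (A.map Complex.ofReal) ^ k := by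
    intro k
    exact map_pow (Complex.ofRealHom.mapMatrix) A k
  have hAk : ∀ k : ℕ, v ᵥ* (A.map Complex.ofReal) ^ k = lam ^ k • v := by
    intro k
    induction k with
    | zero => simp
    | succ k ih =>
      rw [pow_succ, ← Matrix.vecMul_vecMul, ih, Matrix.smul_vecMul, hA, pow_succ,
        smul_smul]
  have hzero : ∀ p : Fin n × Fin m, ∑ i, v i * ((ctrbMat A B) i p : ℂ) = 0 := by
    intro p
    have h1 : v ᵥ* ((A ^ (p.1 : ℕ) * B).map Complex.ofReal) = 0 := by
      have : (A ^ (p.1 : ℕ) * B).map Complex.ofReal =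
          (A.map Complex.ofReal) ^ (p.1 : ℕ) * (B.map Complex.ofReal) := by
        rw [← hmap]
        exact Matrix.map_mul (f := Complex.ofRealHom)
      rw [this, ← Matrix.vecMul_vecMul, hAk, Matrix.smul_vecMul, hB, smul_zero]
    have := congrFun h1 p.2
    simpa [Matrix.vecMul, dotProduct, ctrbMat, Matrix.map_apply] using this
  -- real and imaginary parts
  have hre : (fun i => (v i).re) ᵥ* (ctrbMat A B) = 0 := by
    funext p
    have := congrArg Complex.re (hzero p)
    simpa [Matrix.vecMul, dotProduct, Complex.mul_re] using this
  have him : (fun i => (v i).im) ᵥ* (ctrbMat A B) = 0 := by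
    funext p
    have := congrArg Complex.im (hzero p)
    simpa [Matrix.vecMul, dotProduct, Complex.mul_im] using this
  -- rank argument: rows are linearly independent
  have hinj : ∀ x : Fin n → ℝ, x ᵥ* (ctrbMat A B) = 0 → x = 0 := by
    intro x hx
    have hT : ((ctrbMat A B)ᵀ).rank = n := by
      rw [Matrix.rank_transpose]; exact hctrb
    have hker' : LinearMap.ker ((ctrbMat A B)ᵀ).mulVecLin = ⊥ := by
      have hsum := LinearMap.finrank_range_add_finrank_ker ((ctrbMat A B)ᵀ).mulVecLin
      rw [Module.finrank_pi] at hsum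
      simp only [Fintype.card_fin] at hsum
      have : Module.finrank ℝ (LinearMap.ker ((ctrbMat A B)ᵀ).mulVecLin) = 0 := by
        have : ((ctrbMat A B)ᵀ).rank = Module.finrank ℝ
            (LinearMap.range ((ctrbMat A B)ᵀ).mulVecLin) := rfl
        omega
      exact Submodule.finrank_eq_zero.mp this
    have : ((ctrbMat A B)ᵀ).mulVecLin x = 0 := by
      simp [Matrix.mulVecLin_apply, Matrix.mulVec_transpose, hx]
    have hx0 : x ∈ LinearMap.ker ((ctrbMat A B)ᵀ).mulVecLin := this
    rw [hker', Submodule.mem_bot] at hx0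
    exact hx0
  have hre0 := hinj _ hre
  have him0 := hinj _ him
  apply hv
  funext i
  have h1 := congrFun hre0 i
  have h2 := congrFun him0 i
  simp only [Pi.zero_apply] at h1 h2
  exact Complex.ext h1 h2
end
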